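/- Fix q ∈ k^×. Let A = k[u, v, w] with distinguished element a = u + q·v·w and σ the algebra automorphism with σ(u) = u, σ(v) = q^{-1}v, σ(w) = q^{-1}w. Then the generalized Weyl algebra W_{a,σ} is isomorphic to the quantum matrix algebra O_q(M₂) via u ↦ Ω (the quantum determinant ad − q^{-1}bc), v ↦ b, w ↦ c, x ↦ a, y ↦ d. -/

import Mathlib

noncomputable section

open FreeAlgebra

/-- Generators for the skew Laurent polynomial ring `A[x,x⁻¹;σ]`. -/
inductive SLgen (A : Type) : Type
  | incl : A → SLgen A
  | x : SLgen A
  | xinv : SLgen A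

variable (k : Type) [Field k] (A : Type) [Ring A] [Algebra k A]

/-- Relations for the skew Laurent polynomial ring `A[x,x⁻¹;σ]`. -/
inductive SLrel (σ : A ≃ₐ[k] A) : FreeAlgebra k (SLgen A) → FreeAlgebra k (SLgen A) → Prop
  | add (a b : A) : SLrel σ (ι k (SLgen.incl (a + b))) (ι k (SLgen.incl a) + ι k (SLgen.incl b))
  | mul (a b : A) : SLrel σ (ι k (SLgen.incl (a * b))) (ι k (SLgen.incl a) * ι k (SLgen.incl b))
  | alg (c : k) : SLrel σ (ι k (SLgen.incl (algebraMap k A c))) (algebraMap k _ c)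
  | xxinv : SLrel σ (ι k SLgen.x * ι k SLgen.xinv) 1
  | xinvx : SLrel σ (ι k SLgen.xinv * ι k SLgen.x) 1
  | skew (a : A) : SLrel σ (ι k SLgen.x * ι k (SLgen.incl a)) (ι k (SLgen.incl (σ a)) * ι k SLgen.x)

/-- The skew Laurent polynomial ring `A[x,x⁻¹;σ]`. -/
abbrev SkewLaurent (σ : A ≃ₐ[k] A) : Type := RingQuot (SLrel k A σ)

variable (σ : A ≃ₐ[k] A)

/-- The canonical inclusion `A → A[x,x⁻¹;σ]`. -/
def SkewLaurent.incl (a : A) : SkewLaurent k A σ :=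
  RingQuot.mkAlgHom k (SLrel k A σ) (ι k (SLgen.incl a))

/-- The invertible generator `x` of `A[x,x⁻¹;σ]`. -/
def SkewLaurent.X : SkewLaurent k A σ :=
  RingQuot.mkAlgHom k (SLrel k A σ) (ι k SLgen.x)

/-- The inverse `x⁻¹` of the generator of `A[x,x⁻¹;σ]`. -/
def SkewLaurent.Xinv : SkewLaurent k A σ :=
  RingQuot.mkAlgHom k (SLrel k A σ) (ι k SLgen.xinv)

/-- Generators for a generalized Weyl algebra. -/
inductive Wgen (A : Type) : Type
  | incl : A → Wgen A
  | x : Wgen A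
  | y : Wgen A

/-- Relations for the generalized Weyl algebra `W_{a,σ}`. -/
inductive Wrel (σ : A ≃ₐ[k] A) (a : A) :
    FreeAlgebra k (Wgen A) → FreeAlgebra k (Wgen A) → Prop
  | add (u v : A) : Wrel σ a (ι k (Wgen.incl (u + v))) (ι k (Wgen.incl u) + ι k (Wgen.incl v))
  | mul (u v : A) : Wrel σ a (ι k (Wgen.incl (u * v))) (ι k (Wgen.incl u) * ι k (Wgen.incl v))
  | alg (c : k) : Wrel σ a (ι k (Wgen.incl (algebraMap k A c))) (algebraMap k _ c)
  | yx : Wrel σ a (ι k Wgen.y * ι k Wgen.x) (ι k (Wgen.incl a))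
  | xy : Wrel σ a (ι k Wgen.x * ι k Wgen.y) (ι k (Wgen.incl (σ a)))
  | xu (u : A) : Wrel σ a (ι k Wgen.x * ι k (Wgen.incl u)) (ι k (Wgen.incl (σ u)) * ι k Wgen.x)
  | yu (u : A) : Wrel σ a (ι k Wgen.y * ι k (Wgen.incl (σ u))) (ι k (Wgen.incl u) * ι k Wgen.y)

/-- The generalized Weyl algebra `W_{a,σ}`. -/
abbrev GWA (a : A) : Type := RingQuot (Wrel k A σ a)

/-- The canonical inclusion `A → W_{a,σ}`. -/
def GWA.incl (a : A) (u : A) : GWA k A σ a :=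
  RingQuot.mkAlgHom k (Wrel k A σ a) (ι k (Wgen.incl u))

/-- The generator `x` of `W_{a,σ}`. -/
def GWA.X (a : A) : GWA k A σ a :=
  RingQuot.mkAlgHom k (Wrel k A σ a) (ι k Wgen.x)

/-- The generator `y` of `W_{a,σ}`. -/
def GWA.Y (a : A) : GWA k A σ a :=
  RingQuot.mkAlgHom k (Wrel k A σ a) (ι k Wgen.y)


variable (q : k)

/-- Relations of the quantum matrix algebra `O_q(M₂)`: generators `0 = a`, `1 = b`,
`2 = c`, `3 = d` with `bc = cb`, `ab = q⁻¹ba`, `ac = q⁻¹ca`, `db = qbd`, `dc = qcd`,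
`ad - da = (q⁻¹ - q)bc`. -/
inductive M2Rel : FreeAlgebra k (Fin 4) → FreeAlgebra k (Fin 4) → Prop
  | bc : M2Rel (ι k (1 : Fin 4) * ι k (2 : Fin 4)) (ι k (2 : Fin 4) * ι k (1 : Fin 4))
  | ab : M2Rel (ι k (0 : Fin 4) * ι k (1 : Fin 4)) (q⁻¹ • (ι k (1 : Fin 4) * ι k (0 : Fin 4)))
  | ac : M2Rel (ι k (0 : Fin 4) * ι k (2 : Fin 4)) (q⁻¹ • (ι k (2 : Fin 4) * ι k (0 : Fin 4)))
  | db : M2Rel (ι k (3 : Fin 4) * ι k (1 : Fin 4)) (q • (ι k (1 : Fin 4) * ι k (3 : Fin 4)))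
  | dc : M2Rel (ι k (3 : Fin 4) * ι k (2 : Fin 4)) (q • (ι k (2 : Fin 4) * ι k (3 : Fin 4)))
  | ad : M2Rel (ι k (0 : Fin 4) * ι k (3 : Fin 4))
      (ι k (3 : Fin 4) * ι k (0 : Fin 4) + (q⁻¹ - q) • (ι k (1 : Fin 4) * ι k (2 : Fin 4)))

/-- The quantum matrix algebra `O_q(M₂)`. -/
abbrev OqM2 : Type := RingQuot (M2Rel k q)

/-- The generator `a` of `O_q(M₂)`. -/
def OqM2.Ag : OqM2 k q := RingQuot.mkAlgHom k (M2Rel k q) (ι k (0 : Fin 4))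
/-- The generator `b` of `O_q(M₂)`. -/
def OqM2.B : OqM2 k q := RingQuot.mkAlgHom k (M2Rel k q) (ι k (1 : Fin 4))
/-- The generator `c` of `O_q(M₂)`. -/
def OqM2.C : OqM2 k q := RingQuot.mkAlgHom k (M2Rel k q) (ι k (2 : Fin 4))
/-- The generator `d` of `O_q(M₂)`. -/
def OqM2.D : OqM2 k q := RingQuot.mkAlgHom k (M2Rel k q) (ι k (3 : Fin 4))

/-- The quantum determinant `Ω = ad - q⁻¹bc` of `O_q(M₂)`. -/
def OqM2.qdet : OqM2 k q := OqM2.Ag k q * OqM2.D k q - q⁻¹ • (OqM2.B k q * OqM2.C k q)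

namespace GwaOq

open MvPolynomial

variable {k : Type} [Field k] {q : k}

local notation "𝔸" => MvPolynomial (Fin 3) k

/-! ### Relations in `OqM2` -/

section OqRel
variable (k q)

lemma rbc : OqM2.B k q * OqM2.C k q = OqM2.C k q * OqM2.B k q := by
  simpa [OqM2.B, OqM2.C] using RingQuot.mkAlgHom_rel k (M2Rel.bc (k := k) (q := q))

lemma rab : OqM2.Ag k q * OqM2.B k q = q⁻¹ • (OqM2.B k q * OqM2.Ag k q) := by
  simpa [OqM2.Ag, OqM2.B] using RingQuot.mkAlgHom_rel k (M2Rel.ab (k := k) (q := q))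

lemma rac : OqM2.Ag k q * OqM2.C k q = q⁻¹ • (OqM2.C k q * OqM2.Ag k q) := by
  simpa [OqM2.Ag, OqM2.C] using RingQuot.mkAlgHom_rel k (M2Rel.ac (k := k) (q := q))

lemma rdb : OqM2.D k q * OqM2.B k q = q • (OqM2.B k q * OqM2.D k q) := by
  simpa [OqM2.D, OqM2.B] using RingQuot.mkAlgHom_rel k (M2Rel.db (k := k) (q := q))

lemma rdc : OqM2.D k q * OqM2.C k q = q • (OqM2.C k q * OqM2.D k q) := by
  simpa [OqM2.D, OqM2.C] using RingQuot.mkAlgHom_rel k (M2Rel.dc (k := k) (q := q))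

lemma rad : OqM2.Ag k q * OqM2.D k q =
    OqM2.D k q * OqM2.Ag k q + (q⁻¹ - q) • (OqM2.B k q * OqM2.C k q) := by
  simpa [OqM2.Ag, OqM2.B, OqM2.C, OqM2.D] using
    RingQuot.mkAlgHom_rel k (M2Rel.ad (k := k) (q := q))

lemma rda : OqM2.D k q * OqM2.Ag k q =
    OqM2.Ag k q * OqM2.D k q - (q⁻¹ - q) • (OqM2.B k q * OqM2.C k q) := by
  rw [rad, add_sub_cancel_right]

end OqRel

section Omega
variable (k q)
variable (hq0 : q ≠ 0)


include hq0

lemma omega_b : (OqM2.qdet k q) * (OqM2.B k q) = (OqM2.B k q) * (OqM2.qdet k q) := by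
  have h1 : (OqM2.Ag k q) * (OqM2.D k q) * (OqM2.B k q) = (OqM2.B k q) * ((OqM2.Ag k q) * (OqM2.D k q)) := by
    rw [mul_assoc, rdb, mul_smul_comm, ← mul_assoc, rab, smul_mul_assoc, smul_smul,
      mul_inv_cancel₀ hq0, one_smul, mul_assoc]
  have h2 : (OqM2.B k q) * (OqM2.C k q) * (OqM2.B k q) = (OqM2.B k q) * ((OqM2.B k q) * (OqM2.C k q)) := by
    rw [mul_assoc, ← rbc]
  rw [OqM2.qdet, sub_mul, mul_sub, smul_mul_assoc, mul_smul_comm, h1, h2]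

lemma omega_c : (OqM2.qdet k q) * (OqM2.C k q) = (OqM2.C k q) * (OqM2.qdet k q) := by
  have h1 : (OqM2.Ag k q) * (OqM2.D k q) * (OqM2.C k q) = (OqM2.C k q) * ((OqM2.Ag k q) * (OqM2.D k q)) := by
    rw [mul_assoc, rdc, mul_smul_comm, ← mul_assoc, rac, smul_mul_assoc, smul_smul,
      mul_inv_cancel₀ hq0, one_smul, mul_assoc]
  have h2 : (OqM2.B k q) * (OqM2.C k q) * (OqM2.C k q) = (OqM2.C k q) * ((OqM2.B k q) * (OqM2.C k q)) := by
    rw [rbc, mul_assoc, rbc]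
  rw [OqM2.qdet, sub_mul, mul_sub, smul_mul_assoc, mul_smul_comm, h1, h2]

lemma hba : (OqM2.B k q) * (OqM2.Ag k q) = q • ((OqM2.Ag k q) * (OqM2.B k q)) := by
  rw [rab, smul_smul, mul_inv_cancel₀ hq0, one_smul]

lemma hca : (OqM2.C k q) * (OqM2.Ag k q) = q • ((OqM2.Ag k q) * (OqM2.C k q)) := by
  rw [rac, smul_smul, mul_inv_cancel₀ hq0, one_smul]

lemma hscal : (q⁻¹ - q) + q⁻¹ * (q * q) = q⁻¹ := by
  field_simp
  ring

lemma omega_a : (OqM2.Ag k q) * (OqM2.qdet k q) = (OqM2.qdet k q) * (OqM2.Ag k q) := by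
  have h1 : ((OqM2.Ag k q) * (OqM2.D k q)) * (OqM2.Ag k q) = (OqM2.Ag k q) * ((OqM2.Ag k q) * (OqM2.D k q)) - (q⁻¹ - q) • ((OqM2.Ag k q) * ((OqM2.B k q) * (OqM2.C k q))) := by
    rw [mul_assoc, rda, mul_sub, mul_smul_comm]
  have h2 : ((OqM2.B k q) * (OqM2.C k q)) * (OqM2.Ag k q) = (q * q) • ((OqM2.Ag k q) * ((OqM2.B k q) * (OqM2.C k q))) := by
    rw [mul_assoc, hca k q hq0, mul_smul_comm, ← mul_assoc, hba k q hq0, smul_mul_assoc,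
      smul_smul, mul_assoc]
  rw [OqM2.qdet, mul_sub, sub_mul, h1, mul_smul_comm, smul_mul_assoc, h2, smul_smul,
    sub_sub, ← add_smul, hscal k q hq0]

lemma omega_d : (OqM2.D k q) * (OqM2.qdet k q) = (OqM2.qdet k q) * (OqM2.D k q) := by
  have h1 : (OqM2.D k q) * ((OqM2.Ag k q) * (OqM2.D k q)) = ((OqM2.Ag k q) * (OqM2.D k q)) * (OqM2.D k q) - (q⁻¹ - q) • (((OqM2.B k q) * (OqM2.C k q)) * (OqM2.D k q)) := by
    rw [← mul_assoc, rda, sub_mul, smul_mul_assoc]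
  have h2 : (OqM2.D k q) * ((OqM2.B k q) * (OqM2.C k q)) = (q * q) • (((OqM2.B k q) * (OqM2.C k q)) * (OqM2.D k q)) := by
    rw [← mul_assoc, rdb, smul_mul_assoc, mul_assoc, rdc, mul_smul_comm, smul_smul,
      ← mul_assoc]
  rw [OqM2.qdet, mul_sub, sub_mul, h1, mul_smul_comm, smul_mul_assoc, h2, smul_smul,
    sub_sub, ← add_smul, hscal k q hq0]

omit hq0 in
lemma dA : (OqM2.D k q) * (OqM2.Ag k q) = (OqM2.qdet k q) + q • ((OqM2.B k q) * (OqM2.C k q)) := by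
  rw [rda, OqM2.qdet]; module

end Omega

/-! ### The commutative subalgebra generated by `(OqM2.qdet k q), B, C` and the map from `𝔸` -/

section Fhom

variable (k q)

lemma sComm (hq0 : q ≠ 0) : ∀ x ∈ ({OqM2.qdet k q, OqM2.B k q, OqM2.C k q} : Set (OqM2 k q)),
    ∀ y ∈ ({OqM2.qdet k q, OqM2.B k q, OqM2.C k q} : Set (OqM2 k q)), x * y = y * x := by
  rintro x hx y hy
  simp only [Set.mem_insert_iff, Set.mem_singleton_iff] at hx hy
  rcases hx with rfl | rfl | rfl <;> rcases hy with rfl | rfl | rfl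
  · rfl
  · exact omega_b k q hq0
  · exact omega_c k q hq0
  · exact (omega_b k q hq0).symm
  · rfl
  · exact rbc k q
  · exact (omega_c k q hq0).symm
  · exact (rbc k q).symm
  · rfl

/-- The algebra map `k[u,v,w] → O_q(M₂)`, `u ↦ (OqM2.qdet k q)`, `v ↦ B`, `w ↦ C`. -/
noncomputable def Fhom (hq0 : q ≠ 0) : 𝔸 →ₐ[k] OqM2 k q :=
  letI : CommRing (Algebra.adjoin k ({OqM2.qdet k q, OqM2.B k q, OqM2.C k q} :
      Set (OqM2 k q))) := Algebra.adjoinCommRingOfComm k (sComm k q hq0)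
  (Algebra.adjoin k ({OqM2.qdet k q, OqM2.B k q, OqM2.C k q} : Set (OqM2 k q))).val.comp
    (MvPolynomial.aeval
      ![⟨OqM2.qdet k q, Algebra.subset_adjoin (by simp)⟩,
        ⟨OqM2.B k q, Algebra.subset_adjoin (by simp)⟩,
        ⟨OqM2.C k q, Algebra.subset_adjoin (by simp)⟩])

@[simp] lemma Fhom_X0 (hq0 : q ≠ 0) : Fhom k q hq0 (X 0) = OqM2.qdet k q := by
  simp [Fhom]

@[simp] lemma Fhom_X1 (hq0 : q ≠ 0) : Fhom k q hq0 (X 1) = OqM2.B k q := by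
  simp [Fhom]

@[simp] lemma Fhom_X2 (hq0 : q ≠ 0) : Fhom k q hq0 (X 2) = OqM2.C k q := by
  simp [Fhom]

end Fhom

/-! ### Commutation of `x` and `y` with the image of `𝔸` -/

section Comm

variable (k q)

lemma a_comm (σ : 𝔸 ≃ₐ[k] 𝔸) (hq0 : q ≠ 0)
    (hu : σ (X 0 : 𝔸) = X 0) (hv : σ (X 1 : 𝔸) = (q⁻¹ • X 1 : 𝔸)) (hw : σ (X 2 : 𝔸) = (q⁻¹ • X 2 : 𝔸))
    (p : 𝔸) : OqM2.Ag k q * Fhom k q hq0 p = Fhom k q hq0 (σ p) * OqM2.Ag k q := by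
  induction p using MvPolynomial.induction_on with
  | C r =>
      rw [← MvPolynomial.algebraMap_eq, AlgEquiv.commutes, AlgHom.commutes, Algebra.commutes]
  | add p₁ p₂ ih₁ ih₂ =>
      rw [map_add, map_add, map_add, mul_add, add_mul, ih₁, ih₂]
  | mul_X p i ih =>
      have key : OqM2.Ag k q * Fhom k q hq0 (X i) =
          Fhom k q hq0 (σ (X i)) * OqM2.Ag k q := by
        fin_cases i
        · show OqM2.Ag k q * Fhom k q hq0 (X 0) = Fhom k q hq0 (σ (X 0)) * OqM2.Ag k q
          rw [hu, Fhom_X0]; exact omega_a k q hq0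
        · show OqM2.Ag k q * Fhom k q hq0 (X 1) = Fhom k q hq0 (σ (X 1)) * OqM2.Ag k q
          rw [hv, map_smul, Fhom_X1, smul_mul_assoc, ← rab]
        · show OqM2.Ag k q * Fhom k q hq0 (X 2) = Fhom k q hq0 (σ (X 2)) * OqM2.Ag k q
          rw [hw, map_smul, Fhom_X2, smul_mul_assoc, ← rac]
      rw [map_mul, map_mul, map_mul, ← mul_assoc, ih, mul_assoc, key, ← mul_assoc]

lemma d_comm (σ : 𝔸 ≃ₐ[k] 𝔸) (hq0 : q ≠ 0)
    (hu : σ (X 0 : 𝔸) = X 0) (hv : σ (X 1 : 𝔸) = (q⁻¹ • X 1 : 𝔸)) (hw : σ (X 2 : 𝔸) = (q⁻¹ • X 2 : 𝔸))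
    (p : 𝔸) : OqM2.D k q * Fhom k q hq0 (σ p) = Fhom k q hq0 p * OqM2.D k q := by
  induction p using MvPolynomial.induction_on with
  | C r =>
      rw [← MvPolynomial.algebraMap_eq, AlgEquiv.commutes, AlgHom.commutes, Algebra.commutes]
  | add p₁ p₂ ih₁ ih₂ =>
      rw [map_add, map_add, map_add, mul_add, add_mul, ih₁, ih₂]
  | mul_X p i ih =>
      have key : OqM2.D k q * Fhom k q hq0 (σ (X i)) =
          Fhom k q hq0 (X i) * OqM2.D k q := by
        fin_cases i
        · show OqM2.D k q * Fhom k q hq0 (σ (X 0)) = Fhom k q hq0 (X 0) * OqM2.D k q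
          rw [hu, Fhom_X0]; exact omega_d k q hq0
        · show OqM2.D k q * Fhom k q hq0 (σ (X 1)) = Fhom k q hq0 (X 1) * OqM2.D k q
          rw [hv, map_smul, Fhom_X1, mul_smul_comm, rdb, smul_smul,
            inv_mul_cancel₀ hq0, one_smul]
        · show OqM2.D k q * Fhom k q hq0 (σ (X 2)) = Fhom k q hq0 (X 2) * OqM2.D k q
          rw [hw, map_smul, Fhom_X2, mul_smul_comm, rdc, smul_smul,
            inv_mul_cancel₀ hq0, one_smul]
      rw [map_mul, map_mul, map_mul, ← mul_assoc, ih, mul_assoc, key, ← mul_assoc]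

/-- the distinguished element `a = u + q v w` -/
noncomputable def aEl : 𝔸 := (X 0 : 𝔸) + q • (X 1 * X 2)

lemma sigma_aEl (σ : 𝔸 ≃ₐ[k] 𝔸) (hq0 : q ≠ 0)
    (hu : σ (X 0 : 𝔸) = X 0) (hv : σ (X 1 : 𝔸) = (q⁻¹ • X 1 : 𝔸)) (hw : σ (X 2 : 𝔸) = (q⁻¹ • X 2 : 𝔸)) :
    σ (aEl k q) = (X 0 : 𝔸) + q⁻¹ • (X 1 * X 2) := by
  have h : (q⁻¹ • (X 1) : 𝔸) * (q⁻¹ • X 2) = (q⁻¹ * q⁻¹) • (X 1 * X 2) := by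
    rw [smul_mul_assoc, mul_smul_comm, smul_smul]
  have hs : q * (q⁻¹ * q⁻¹) = q⁻¹ := by field_simp
  rw [aEl, map_add, map_smul, map_mul, hu, hv, hw, h, smul_smul, hs]

end Comm

/-! ### The forward map `GWA → OqM2` -/

section Fwd

variable (k q)

noncomputable def fwdFree (hq0 : q ≠ 0) : FreeAlgebra k (Wgen 𝔸) →ₐ[k] OqM2 k q :=
  FreeAlgebra.lift k (fun g => match g with
    | Wgen.incl p => Fhom k q hq0 p
    | Wgen.x => OqM2.Ag k q
    | Wgen.y => OqM2.D k q)

@[simp] lemma fwdFree_incl (hq0 : q ≠ 0) (p : 𝔸) :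
    fwdFree k q hq0 (ι k (Wgen.incl p)) = Fhom k q hq0 p := by
  simp [fwdFree]

@[simp] lemma fwdFree_x (hq0 : q ≠ 0) :
    fwdFree k q hq0 (ι k Wgen.x) = OqM2.Ag k q := by
  simp [fwdFree]

@[simp] lemma fwdFree_y (hq0 : q ≠ 0) :
    fwdFree k q hq0 (ι k Wgen.y) = OqM2.D k q := by
  simp [fwdFree]

lemma fwd_rel (σ : 𝔸 ≃ₐ[k] 𝔸) (hq0 : q ≠ 0)
    (hu : σ (X 0 : 𝔸) = X 0) (hv : σ (X 1 : 𝔸) = (q⁻¹ • X 1 : 𝔸)) (hw : σ (X 2 : 𝔸) = (q⁻¹ • X 2 : 𝔸)) :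
    ∀ ⦃x y : FreeAlgebra k (Wgen 𝔸)⦄, Wrel k 𝔸 σ (aEl k q) x y →
      fwdFree k q hq0 x = fwdFree k q hq0 y := by
  intro x y h
  cases h with
  | add u v => simp
  | mul u v => simp
  | alg c => simp
  | yx =>
      simp only [map_mul, fwdFree_x, fwdFree_y, fwdFree_incl]
      rw [aEl, map_add, map_smul, map_mul, Fhom_X0, Fhom_X1, Fhom_X2]
      exact dA k q
  | xy =>
      simp only [map_mul, fwdFree_x, fwdFree_y, fwdFree_incl]
      rw [sigma_aEl k q σ hq0 hu hv hw, map_add, map_smul, map_mul,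
        Fhom_X0, Fhom_X1, Fhom_X2, OqM2.qdet, sub_add_cancel]
  | xu u =>
      simp only [map_mul, fwdFree_x, fwdFree_incl]
      exact a_comm k q σ hq0 hu hv hw u
  | yu u =>
      simp only [map_mul, fwdFree_y, fwdFree_incl]
      exact d_comm k q σ hq0 hu hv hw u

noncomputable def fwd (σ : 𝔸 ≃ₐ[k] 𝔸) (hq0 : q ≠ 0)
    (hu : σ (X 0 : 𝔸) = X 0) (hv : σ (X 1 : 𝔸) = (q⁻¹ • X 1 : 𝔸)) (hw : σ (X 2 : 𝔸) = (q⁻¹ • X 2 : 𝔸)) :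
    GWA k 𝔸 σ (aEl k q) →ₐ[k] OqM2 k q :=
  RingQuot.liftAlgHom k ⟨fwdFree k q hq0, fwd_rel k q σ hq0 hu hv hw⟩

end Fwd

/-! ### The backward map `OqM2 → GWA` -/

section Bwd

variable (k q)

/-- `A → W_{a,σ}` as an algebra hom. -/
noncomputable def inclHom (σ : 𝔸 ≃ₐ[k] 𝔸) : 𝔸 →ₐ[k] GWA k 𝔸 σ (aEl k q) where
  toFun u := GWA.incl k 𝔸 σ (aEl k q) u
  map_one' := by
    simpa [GWA.incl] using
      RingQuot.mkAlgHom_rel k (Wrel.alg (k := k) (A := 𝔸) (σ := σ) (a := aEl k q) 1)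
  map_mul' u v := by
    simpa [GWA.incl] using
      RingQuot.mkAlgHom_rel k (Wrel.mul (k := k) (A := 𝔸) (σ := σ) (a := aEl k q) u v)
  map_zero' := by
    simpa [GWA.incl] using
      RingQuot.mkAlgHom_rel k (Wrel.alg (k := k) (A := 𝔸) (σ := σ) (a := aEl k q) 0)
  map_add' u v := by
    simpa [GWA.incl] using
      RingQuot.mkAlgHom_rel k (Wrel.add (k := k) (A := 𝔸) (σ := σ) (a := aEl k q) u v)
  commutes' r := by
    simpa [GWA.incl] using
      RingQuot.mkAlgHom_rel k (Wrel.alg (k := k) (A := 𝔸) (σ := σ) (a := aEl k q) r)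

lemma inclHom_apply (σ : 𝔸 ≃ₐ[k] 𝔸) (p : 𝔸) :
    inclHom k q σ p = GWA.incl k 𝔸 σ (aEl k q) p := rfl

lemma g_yx (σ : 𝔸 ≃ₐ[k] 𝔸) :
    GWA.Y k 𝔸 σ (aEl k q) * GWA.X k 𝔸 σ (aEl k q) = inclHom k q σ (aEl k q) := by
  simpa [GWA.X, GWA.Y, inclHom_apply, GWA.incl] using
    RingQuot.mkAlgHom_rel k (Wrel.yx (k := k) (A := 𝔸) (σ := σ) (a := aEl k q))

lemma g_xy (σ : 𝔸 ≃ₐ[k] 𝔸) :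
    GWA.X k 𝔸 σ (aEl k q) * GWA.Y k 𝔸 σ (aEl k q) = inclHom k q σ (σ (aEl k q)) := by
  simpa [GWA.X, GWA.Y, inclHom_apply, GWA.incl] using
    RingQuot.mkAlgHom_rel k (Wrel.xy (k := k) (A := 𝔸) (σ := σ) (a := aEl k q))

lemma g_xu (σ : 𝔸 ≃ₐ[k] 𝔸) (p : 𝔸) :
    GWA.X k 𝔸 σ (aEl k q) * inclHom k q σ p =
      inclHom k q σ (σ p) * GWA.X k 𝔸 σ (aEl k q) := by
  simpa [GWA.X, inclHom_apply, GWA.incl] using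
    RingQuot.mkAlgHom_rel k (Wrel.xu (k := k) (A := 𝔸) (σ := σ) (a := aEl k q) p)

lemma g_yu (σ : 𝔸 ≃ₐ[k] 𝔸) (p : 𝔸) :
    GWA.Y k 𝔸 σ (aEl k q) * inclHom k q σ (σ p) =
      inclHom k q σ p * GWA.Y k 𝔸 σ (aEl k q) := by
  simpa [GWA.Y, inclHom_apply, GWA.incl] using
    RingQuot.mkAlgHom_rel k (Wrel.yu (k := k) (A := 𝔸) (σ := σ) (a := aEl k q) p)

noncomputable def bwdFree (σ : 𝔸 ≃ₐ[k] 𝔸) :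
    FreeAlgebra k (Fin 4) →ₐ[k] GWA k 𝔸 σ (aEl k q) :=
  FreeAlgebra.lift k
    ![GWA.X k 𝔸 σ (aEl k q), inclHom k q σ (X 1), inclHom k q σ (X 2),
      GWA.Y k 𝔸 σ (aEl k q)]

@[simp] lemma bwdFree_0 (σ : 𝔸 ≃ₐ[k] 𝔸) :
    bwdFree k q σ (ι k (0 : Fin 4)) = GWA.X k 𝔸 σ (aEl k q) := by
  simp [bwdFree]

@[simp] lemma bwdFree_1 (σ : 𝔸 ≃ₐ[k] 𝔸) :
    bwdFree k q σ (ι k (1 : Fin 4)) = inclHom k q σ (X 1) := by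
  simp [bwdFree]

@[simp] lemma bwdFree_2 (σ : 𝔸 ≃ₐ[k] 𝔸) :
    bwdFree k q σ (ι k (2 : Fin 4)) = inclHom k q σ (X 2) := by
  simp [bwdFree]

@[simp] lemma bwdFree_3 (σ : 𝔸 ≃ₐ[k] 𝔸) :
    bwdFree k q σ (ι k (3 : Fin 4)) = GWA.Y k 𝔸 σ (aEl k q) := by
  simp [bwdFree]

lemma bwd_rel (σ : 𝔸 ≃ₐ[k] 𝔸) (hq0 : q ≠ 0)
    (hu : σ (X 0 : 𝔸) = X 0) (hv : σ (X 1 : 𝔸) = (q⁻¹ • X 1 : 𝔸))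
    (hw : σ (X 2 : 𝔸) = (q⁻¹ • X 2 : 𝔸)) :
    ∀ ⦃x y : FreeAlgebra k (Fin 4)⦄, M2Rel k q x y →
      bwdFree k q σ x = bwdFree k q σ y := by
  intro x y h
  cases h with
  | bc =>
      simp only [map_mul, bwdFree_1, bwdFree_2]
      rw [← map_mul, ← map_mul, mul_comm]
  | ab =>
      simp only [map_mul, map_smul, bwdFree_0, bwdFree_1]
      rw [g_xu, hv, map_smul, smul_mul_assoc]
  | ac =>
      simp only [map_mul, map_smul, bwdFree_0, bwdFree_2]
      rw [g_xu, hw, map_smul, smul_mul_assoc]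
  | db =>
      simp only [map_mul, map_smul, bwdFree_1, bwdFree_3]
      have h := g_yu k q σ (q • X 1)
      rw [map_smul, hv, smul_smul, mul_inv_cancel₀ hq0, one_smul, map_smul,
        smul_mul_assoc] at h
      rw [h]
  | dc =>
      simp only [map_mul, map_smul, bwdFree_2, bwdFree_3]
      have h := g_yu k q σ (q • X 2)
      rw [map_smul, hw, smul_smul, mul_inv_cancel₀ hq0, one_smul, map_smul,
        smul_mul_assoc] at h
      rw [h]
  | ad =>
      simp only [map_mul, map_add, map_smul, bwdFree_0, bwdFree_1, bwdFree_2, bwdFree_3]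
      rw [g_xy, g_yx, sigma_aEl k q σ hq0 hu hv hw, ← map_mul, ← map_smul, ← map_add]
      congr 1
      rw [aEl]
      module

noncomputable def bwd (σ : 𝔸 ≃ₐ[k] 𝔸) (hq0 : q ≠ 0)
    (hu : σ (X 0 : 𝔸) = X 0) (hv : σ (X 1 : 𝔸) = (q⁻¹ • X 1 : 𝔸))
    (hw : σ (X 2 : 𝔸) = (q⁻¹ • X 2 : 𝔸)) :
    OqM2 k q →ₐ[k] GWA k 𝔸 σ (aEl k q) :=
  RingQuot.liftAlgHom k ⟨bwdFree k q σ, bwd_rel k q σ hq0 hu hv hw⟩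

end Bwd

/-! ### The equivalence -/

section Equiv

variable (k q)

@[simp] lemma fwd_incl (σ : 𝔸 ≃ₐ[k] 𝔸) (hq0 : q ≠ 0)
    (hu : σ (X 0 : 𝔸) = X 0) (hv : σ (X 1 : 𝔸) = (q⁻¹ • X 1 : 𝔸))
    (hw : σ (X 2 : 𝔸) = (q⁻¹ • X 2 : 𝔸))  (p : 𝔸) :
    fwd k q σ hq0 hu hv hw (GWA.incl k 𝔸 σ (aEl k q) p) = Fhom k q hq0 p := by
  rw [GWA.incl, fwd, RingQuot.liftAlgHom_mkAlgHom_apply, fwdFree_incl]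

@[simp] lemma fwd_X (σ : 𝔸 ≃ₐ[k] 𝔸) (hq0 : q ≠ 0)
    (hu : σ (X 0 : 𝔸) = X 0) (hv : σ (X 1 : 𝔸) = (q⁻¹ • X 1 : 𝔸))
    (hw : σ (X 2 : 𝔸) = (q⁻¹ • X 2 : 𝔸))  :
    fwd k q σ hq0 hu hv hw (GWA.X k 𝔸 σ (aEl k q)) = OqM2.Ag k q := by
  rw [GWA.X, fwd, RingQuot.liftAlgHom_mkAlgHom_apply, fwdFree_x]

@[simp] lemma fwd_Y (σ : 𝔸 ≃ₐ[k] 𝔸) (hq0 : q ≠ 0)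
    (hu : σ (X 0 : 𝔸) = X 0) (hv : σ (X 1 : 𝔸) = (q⁻¹ • X 1 : 𝔸))
    (hw : σ (X 2 : 𝔸) = (q⁻¹ • X 2 : 𝔸))  :
    fwd k q σ hq0 hu hv hw (GWA.Y k 𝔸 σ (aEl k q)) = OqM2.D k q := by
  rw [GWA.Y, fwd, RingQuot.liftAlgHom_mkAlgHom_apply, fwdFree_y]

@[simp] lemma bwd_A (σ : 𝔸 ≃ₐ[k] 𝔸) (hq0 : q ≠ 0)
    (hu : σ (X 0 : 𝔸) = X 0) (hv : σ (X 1 : 𝔸) = (q⁻¹ • X 1 : 𝔸))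
    (hw : σ (X 2 : 𝔸) = (q⁻¹ • X 2 : 𝔸))  :
    bwd k q σ hq0 hu hv hw (OqM2.Ag k q) = GWA.X k 𝔸 σ (aEl k q) := by
  rw [OqM2.Ag, bwd, RingQuot.liftAlgHom_mkAlgHom_apply, bwdFree_0]

@[simp] lemma bwd_B (σ : 𝔸 ≃ₐ[k] 𝔸) (hq0 : q ≠ 0)
    (hu : σ (X 0 : 𝔸) = X 0) (hv : σ (X 1 : 𝔸) = (q⁻¹ • X 1 : 𝔸))
    (hw : σ (X 2 : 𝔸) = (q⁻¹ • X 2 : 𝔸))  :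
    bwd k q σ hq0 hu hv hw (OqM2.B k q) = inclHom k q σ (X 1) := by
  rw [OqM2.B, bwd, RingQuot.liftAlgHom_mkAlgHom_apply, bwdFree_1]

@[simp] lemma bwd_C (σ : 𝔸 ≃ₐ[k] 𝔸) (hq0 : q ≠ 0)
    (hu : σ (X 0 : 𝔸) = X 0) (hv : σ (X 1 : 𝔸) = (q⁻¹ • X 1 : 𝔸))
    (hw : σ (X 2 : 𝔸) = (q⁻¹ • X 2 : 𝔸))  :
    bwd k q σ hq0 hu hv hw (OqM2.C k q) = inclHom k q σ (X 2) := by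
  rw [OqM2.C, bwd, RingQuot.liftAlgHom_mkAlgHom_apply, bwdFree_2]

@[simp] lemma bwd_D (σ : 𝔸 ≃ₐ[k] 𝔸) (hq0 : q ≠ 0)
    (hu : σ (X 0 : 𝔸) = X 0) (hv : σ (X 1 : 𝔸) = (q⁻¹ • X 1 : 𝔸))
    (hw : σ (X 2 : 𝔸) = (q⁻¹ • X 2 : 𝔸))  :
    bwd k q σ hq0 hu hv hw (OqM2.D k q) = GWA.Y k 𝔸 σ (aEl k q) := by
  rw [OqM2.D, bwd, RingQuot.liftAlgHom_mkAlgHom_apply, bwdFree_3]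

lemma bwd_comp_F (σ : 𝔸 ≃ₐ[k] 𝔸) (hq0 : q ≠ 0)
    (hu : σ (X 0 : 𝔸) = X 0) (hv : σ (X 1 : 𝔸) = (q⁻¹ • X 1 : 𝔸))
    (hw : σ (X 2 : 𝔸) = (q⁻¹ • X 2 : 𝔸))  :
    (bwd k q σ hq0 hu hv hw).comp (Fhom k q hq0) = inclHom k q σ := by
  apply MvPolynomial.algHom_ext
  intro i
  fin_cases i
  · show bwd k q σ hq0 hu hv hw (Fhom k q hq0 (X 0)) = inclHom k q σ (X 0)
    rw [Fhom_X0, OqM2.qdet, map_sub, map_smul, map_mul, map_mul,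
      bwd_A, bwd_B, bwd_C, bwd_D, g_xy, sigma_aEl k q σ hq0 hu hv hw,
      ← map_mul, ← map_smul, map_add, add_sub_cancel_right]
  · show bwd k q σ hq0 hu hv hw (Fhom k q hq0 (X 1)) = inclHom k q σ (X 1)
    rw [Fhom_X1, bwd_B]
  · show bwd k q σ hq0 hu hv hw (Fhom k q hq0 (X 2)) = inclHom k q σ (X 2)
    rw [Fhom_X2, bwd_C]

lemma fwd_comp_bwd (σ : 𝔸 ≃ₐ[k] 𝔸) (hq0 : q ≠ 0)
    (hu : σ (X 0 : 𝔸) = X 0) (hv : σ (X 1 : 𝔸) = (q⁻¹ • X 1 : 𝔸))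
    (hw : σ (X 2 : 𝔸) = (q⁻¹ • X 2 : 𝔸))  :
    (fwd k q σ hq0 hu hv hw).comp (bwd k q σ hq0 hu hv hw) = AlgHom.id k (OqM2 k q) := by
  apply RingQuot.ringQuot_ext'
  apply FreeAlgebra.hom_ext
  funext i
  fin_cases i
  · show fwd k q σ hq0 hu hv hw (bwd k q σ hq0 hu hv hw (OqM2.Ag k q)) = OqM2.Ag k q
    rw [bwd_A, fwd_X]
  · show fwd k q σ hq0 hu hv hw (bwd k q σ hq0 hu hv hw (OqM2.B k q)) = OqM2.B k q
    rw [bwd_B, inclHom_apply, fwd_incl, Fhom_X1]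
  · show fwd k q σ hq0 hu hv hw (bwd k q σ hq0 hu hv hw (OqM2.C k q)) = OqM2.C k q
    rw [bwd_C, inclHom_apply, fwd_incl, Fhom_X2]
  · show fwd k q σ hq0 hu hv hw (bwd k q σ hq0 hu hv hw (OqM2.D k q)) = OqM2.D k q
    rw [bwd_D, fwd_Y]

lemma bwd_comp_fwd (σ : 𝔸 ≃ₐ[k] 𝔸) (hq0 : q ≠ 0)
    (hu : σ (X 0 : 𝔸) = X 0) (hv : σ (X 1 : 𝔸) = (q⁻¹ • X 1 : 𝔸))
    (hw : σ (X 2 : 𝔸) = (q⁻¹ • X 2 : 𝔸))  :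
    (bwd k q σ hq0 hu hv hw).comp (fwd k q σ hq0 hu hv hw) =
      AlgHom.id k (GWA k 𝔸 σ (aEl k q)) := by
  apply RingQuot.ringQuot_ext'
  apply FreeAlgebra.hom_ext
  funext g
  cases g with
  | incl p =>
      show bwd k q σ hq0 hu hv hw (fwd k q σ hq0 hu hv hw
        (GWA.incl k 𝔸 σ (aEl k q) p)) = GWA.incl k 𝔸 σ (aEl k q) p
      rw [fwd_incl, ← inclHom_apply k q σ p]
      exact AlgHom.congr_fun (bwd_comp_F k q σ hq0 hu hv hw) p
  | x =>
      show bwd k q σ hq0 hu hv hw (fwd k q σ hq0 hu hv hw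
        (GWA.X k 𝔸 σ (aEl k q))) = GWA.X k 𝔸 σ (aEl k q)
      rw [fwd_X, bwd_A]
  | y =>
      show bwd k q σ hq0 hu hv hw (fwd k q σ hq0 hu hv hw
        (GWA.Y k 𝔸 σ (aEl k q))) = GWA.Y k 𝔸 σ (aEl k q)
      rw [fwd_Y, bwd_D]

/-- The isomorphism `W_{a,σ} ≃ O_q(M₂)`. -/
noncomputable def gwaEquiv (σ : 𝔸 ≃ₐ[k] 𝔸) (hq0 : q ≠ 0)
    (hu : σ (X 0 : 𝔸) = X 0) (hv : σ (X 1 : 𝔸) = (q⁻¹ • X 1 : 𝔸))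
    (hw : σ (X 2 : 𝔸) = (q⁻¹ • X 2 : 𝔸))  : GWA k 𝔸 σ (aEl k q) ≃ₐ[k] OqM2 k q :=
  AlgEquiv.ofAlgHom (fwd k q σ hq0 hu hv hw) (bwd k q σ hq0 hu hv hw)
    (fwd_comp_bwd k q σ hq0 hu hv hw) (bwd_comp_fwd k q σ hq0 hu hv hw)

end Equiv

end GwaOq
/-- For `A = k[u,v,w]`, `a = u + qvw` and `σ(u) = u`, `σ(v) = q⁻¹v`,
`σ(w) = q⁻¹w`, the generalized Weyl algebra `W_{a,σ}` is isomorphic to the quantum matrix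
algebra `O_q(M₂)` via `u ↦ Ω` (the quantum determinant), `v ↦ b`, `w ↦ c`, `x ↦ a`,
`y ↦ d`. -/
theorem gwa_equiv_oqm2 (hq0 : q ≠ 0)
    (σ : MvPolynomial (Fin 3) k ≃ₐ[k] MvPolynomial (Fin 3) k)
    (hu : σ (MvPolynomial.X 0) = MvPolynomial.X 0)
    (hv : σ (MvPolynomial.X 1) = q⁻¹ • MvPolynomial.X 1)
    (hw : σ (MvPolynomial.X 2) = q⁻¹ • MvPolynomial.X 2) :
    ∃ e : GWA k (MvPolynomial (Fin 3) k) σ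
        (MvPolynomial.X 0 + q • (MvPolynomial.X 1 * MvPolynomial.X 2)) ≃ₐ[k] OqM2 k q,
      e (GWA.incl k (MvPolynomial (Fin 3) k) σ
          (MvPolynomial.X 0 + q • (MvPolynomial.X 1 * MvPolynomial.X 2))
          (MvPolynomial.X 0)) = OqM2.qdet k q ∧
      e (GWA.incl k (MvPolynomial (Fin 3) k) σ
          (MvPolynomial.X 0 + q • (MvPolynomial.X 1 * MvPolynomial.X 2))
          (MvPolynomial.X 1)) = OqM2.B k q ∧
      e (GWA.incl k (MvPolynomial (Fin 3) k) σ
          (MvPolynomial.X 0 + q • (MvPolynomial.X 1 * MvPolynomial.X 2))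
          (MvPolynomial.X 2)) = OqM2.C k q ∧
      e (GWA.X k (MvPolynomial (Fin 3) k) σ
          (MvPolynomial.X 0 + q • (MvPolynomial.X 1 * MvPolynomial.X 2))) = OqM2.Ag k q ∧
      e (GWA.Y k (MvPolynomial (Fin 3) k) σ
          (MvPolynomial.X 0 + q • (MvPolynomial.X 1 * MvPolynomial.X 2))) = OqM2.D k q := by
  refine ⟨GwaOq.gwaEquiv k q σ hq0 hu hv hw, ?_, ?_, ?_, ?_, ?_⟩
  · show GwaOq.fwd k q σ hq0 hu hv hw
      (GWA.incl k (MvPolynomial (Fin 3) k) σ (GwaOq.aEl k q) (MvPolynomial.X 0)) =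
        OqM2.qdet k q
    rw [GwaOq.fwd_incl, GwaOq.Fhom_X0]
  · show GwaOq.fwd k q σ hq0 hu hv hw
      (GWA.incl k (MvPolynomial (Fin 3) k) σ (GwaOq.aEl k q) (MvPolynomial.X 1)) =
        OqM2.B k q
    rw [GwaOq.fwd_incl, GwaOq.Fhom_X1]
  · show GwaOq.fwd k q σ hq0 hu hv hw
      (GWA.incl k (MvPolynomial (Fin 3) k) σ (GwaOq.aEl k q) (MvPolynomial.X 2)) =
        OqM2.C k q
    rw [GwaOq.fwd_incl, GwaOq.Fhom_X2]
  · show GwaOq.fwd k q σ hq0 hu hv hw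
      (GWA.X k (MvPolynomial (Fin 3) k) σ (GwaOq.aEl k q)) = OqM2.Ag k q
    rw [GwaOq.fwd_X]
  · show GwaOq.fwd k q σ hq0 hu hv hw
      (GWA.Y k (MvPolynomial (Fin 3) k) σ (GwaOq.aEl k q)) = OqM2.D k q
    rw [GwaOq.fwd_Y]

end
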